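/- Let L be a free ℤ-module of rank 2n with basis {e₁,…,eₙ,x₁,…,xₙ}. For each pair (K,κ) with K ⊆ {1,…,n} and κ : K → {1,…,n} an order-preserving injection, define v_{(K,κ)} = v₁ ∧ … ∧ vₙ ∈ Λ^n L where vᵢ = eᵢ if i ∉ K and vᵢ = eᵢ + x_{κ(i)} if i ∈ K. Then the family {v_{(K,κ)}} indexed by all such pairs is a basis of the ℤ-module Λ^n L. -/

import Mathlib

open ExteriorAlgebra

/-- The index set `𝒦`: pairs `(K, κ)` where `K ⊆ {1,…,n}` and `κ : K → {1,…,n}` is an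
order-preserving (strictly monotone) injection. -/
def KIdx (n : ℕ) : Type :=
  Σ K : Finset (Fin n), {κ : {x // x ∈ K} → Fin n // StrictMono κ}

/-- The basis vector `eᵢ` of `L = ℤ^n ⊕ ℤ^n`. -/
def eVec (n : ℕ) (i : Fin n) : (Fin n ⊕ Fin n) → ℤ := Pi.single (Sum.inl i) 1

/-- The basis vector `xᵢ` of `L = ℤ^n ⊕ ℤ^n`. -/
def xVec (n : ℕ) (i : Fin n) : (Fin n ⊕ Fin n) → ℤ := Pi.single (Sum.inr i) 1

/-- The vector entries of `v_{(K,κ)} = v₁ ∧ … ∧ vₙ`: `vᵢ = eᵢ` if `i ∉ K` and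
`vᵢ = eᵢ + x_{κ(i)}` if `i ∈ K`. -/
def vFun (n : ℕ) (p : KIdx n) : Fin n → ((Fin n ⊕ Fin n) → ℤ) := fun i =>
  if h : i ∈ p.1 then eVec n i + xVec n (p.2.1 ⟨i, h⟩) else eVec n i

namespace Stmt2Aux

variable (n : ℕ)

instance : Fintype (KIdx n) := inferInstanceAs (Fintype (Σ K : Finset (Fin n), {κ : {x // x ∈ K} → Fin n // StrictMono κ}))
instance : DecidableEq (KIdx n) := inferInstanceAs (DecidableEq (Σ K : Finset (Fin n), {κ : {x // x ∈ K} → Fin n // StrictMono κ}))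

abbrev II := Fin n ⊕ Fin n
abbrev MM := (Fin n ⊕ Fin n) → ℤ

/-- canonical enumeration of the index set attached to `p`. -/
def tau (p : KIdx n) : Fin n → II n := fun j =>
  if h : j ∈ p.1 then Sum.inr (p.2.1 ⟨j, h⟩) else Sum.inl j

lemma tau_injective (p : KIdx n) : Function.Injective (tau n p) := by
  intro a b hab
  unfold tau at hab
  by_cases ha : a ∈ p.1 <;> by_cases hb : b ∈ p.1 <;>
    simp [ha, hb] at hab
  · have : (⟨a, ha⟩ : {x // x ∈ p.1}) = ⟨b, hb⟩ := p.2.2.injective hab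
    exact congrArg Subtype.val this
  · exact hab

lemma vFun_apply_inl (q : KIdx n) (i a : Fin n) :
    vFun n q i (Sum.inl a) = if i = a then 1 else 0 := by
  unfold vFun eVec xVec
  by_cases h : i ∈ q.1 <;> simp [h, Pi.single_apply, eq_comm]

lemma vFun_apply_inr (q : KIdx n) (i : Fin n) (b : Fin n) :
    vFun n q i (Sum.inr b) =
      if h : i ∈ q.1 then (if q.2.1 ⟨i, h⟩ = b then 1 else 0) else 0 := by
  unfold vFun eVec xVec
  by_cases h : i ∈ q.1 <;> simp [h, Pi.single_apply, eq_comm]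

/-- The alternating form on `MM n` given by `v ↦ det (v i (c j))`. -/
def dform (c : Fin n → II n) : (MM n) [⋀^Fin n]→ₗ[ℤ] ℤ :=
  (Matrix.detRowAlternating).compLinearMap (LinearMap.funLeft ℤ ℤ c)

/-- A linear form on the exterior algebra extending `dform`. -/
noncomputable def lam (c : Fin n → II n) : ExteriorAlgebra ℤ (MM n) →ₗ[ℤ] ℤ :=
  liftAlternating (Pi.single n (dform n c))

lemma lam_ιMulti (c : Fin n → II n) (v : Fin n → MM n) :
    lam n c (ιMulti ℤ n v) = Matrix.det (Matrix.of fun i j => v i (c j)) := by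
  unfold lam
  rw [liftAlternating_apply_ιMulti, Pi.single_eq_same]
  rfl



/-- The matrix of pairings. -/
noncomputable def Bmat : Matrix (KIdx n) (KIdx n) ℤ := fun p q =>
  Matrix.det (Matrix.of fun i j => vFun n q i (tau n p j))

lemma Bmat_diag (q : KIdx n) : Bmat n q q = 1 := by
  unfold Bmat
  have h1 : (Matrix.of fun i j => vFun n q i (tau n q j)) = (1 : Matrix (Fin n) (Fin n) ℤ) := by
    ext i j
    rw [Matrix.one_apply]
    simp only [Matrix.of_apply]
    unfold tau
    by_cases hj : j ∈ q.1
    · rw [dif_pos hj, vFun_apply_inr]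
      by_cases hi : i ∈ q.1
      · rw [dif_pos hi]
        by_cases hij : i = j
        · subst hij; simp
        · have : q.2.1 ⟨i, hi⟩ ≠ q.2.1 ⟨j, hj⟩ := by
            intro h
            exact hij (congrArg Subtype.val (q.2.2.injective h))
          simp [this, hij]
      · rw [dif_neg hi]
        have : i ≠ j := fun h => hi (h ▸ hj)
        simp [this]
    · rw [dif_neg hj, vFun_apply_inl]
  rw [h1, Matrix.det_one]

/-- Uniqueness: a pair `(K, κ)` is determined by `K` and the image of `κ`. -/
lemma KIdx_eq_of (p q : KIdx n) (h1 : p.1 = q.1)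
    (h2 : p.1.attach.image p.2.1 = q.1.attach.image q.2.1) : p = q := by
  obtain ⟨K, κp, hκp⟩ := p
  obtain ⟨K', κq, hκq⟩ := q
  cases h1
  simp only at h2 ⊢
  have hκ : κp = κq := by
    set S : Finset (Fin n) := K.attach.image κp with hS
    have hcard : S.card = K.card := by
      rw [hS, Finset.card_image_of_injective _ hκp.injective, Finset.card_attach]
    have key : ∀ (κ : {x // x ∈ K} → Fin n), StrictMono κ → K.attach.image κ = S →
        (fun x : Fin K.card => κ (K.orderIsoOfFin rfl x)) = S.orderEmbOfFin hcard := by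
      intro κ hκ him
      apply Finset.orderEmbOfFin_unique
      · intro x
        rw [← him]
        exact Finset.mem_image_of_mem _ (Finset.mem_attach _ _)
      · exact hκ.comp (K.orderIsoOfFin rfl).strictMono
    have e1 := key κp hκp rfl
    have e2 := key κq hκq h2.symm
    funext i
    have : i = (K.orderIsoOfFin rfl) ((K.orderIsoOfFin rfl).symm i) := by simp
    rw [this]
    have := congrFun (e1.trans e2.symm) ((K.orderIsoOfFin rfl).symm i)
    exact this
  cases hκ
  rfl

lemma Bmat_offdiag (p q : KIdx n) (hpq : p ≠ q) (hc : q.1.card ≤ p.1.card) :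
    Bmat n p q = 0 := by
  unfold Bmat
  set Sp : Finset (Fin n) := p.1.attach.image p.2.1 with hSp
  set Sq : Finset (Fin n) := q.1.attach.image q.2.1 with hSq
  by_cases hsub : Sp ⊆ Sq
  · -- images are equal
    have hcards : Sq.card ≤ Sp.card := by
      rw [hSp, hSq, Finset.card_image_of_injective _ p.2.2.injective,
        Finset.card_image_of_injective _ q.2.2.injective, Finset.card_attach,
        Finset.card_attach]
      exact hc
    have hSeq : Sp = Sq := Finset.eq_of_subset_of_card_le hsub hcards
    by_cases hK : p.1 = q.1
    · exact absurd (KIdx_eq_of n p q hK (by rw [← hSp, ← hSq, hSeq])) hpq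
    · -- find duplicate columns
      have hcK : q.1.card = p.1.card := by
        have := congrArg Finset.card hSeq
        rw [hSp, hSq, Finset.card_image_of_injective _ p.2.2.injective,
          Finset.card_image_of_injective _ q.2.2.injective, Finset.card_attach,
          Finset.card_attach] at this
        exact this.symm
      have hnsub : ¬ q.1 ⊆ p.1 := by
        intro h
        exact hK (Finset.eq_of_subset_of_card_le h hcK.ge).symm
      obtain ⟨j', hj'q, hj'p⟩ := Finset.not_subset.mp hnsub
      have : q.2.1 ⟨j', hj'q⟩ ∈ Sp := by
        rw [hSeq, hSq]
        exact Finset.mem_image_of_mem _ (Finset.mem_attach _ _)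
      rw [hSp, Finset.mem_image] at this
      obtain ⟨⟨j, hjp⟩, _, hjj'⟩ := this
      have hne : j ≠ j' := fun h => hj'p (h ▸ hjp)
      apply Matrix.det_zero_of_column_eq hne
      intro i
      simp only [Matrix.of_apply]
      unfold tau
      rw [dif_pos hjp, dif_neg hj'p, hjj', vFun_apply_inr, vFun_apply_inl]
      by_cases hi : i ∈ q.1
      · rw [dif_pos hi]
        by_cases hij : i = j'
        · subst hij; simp
        · have : q.2.1 ⟨i, hi⟩ ≠ q.2.1 ⟨j', hj'q⟩ := by
            intro h
            exact hij (congrArg Subtype.val (q.2.2.injective h))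
          simp [this, hij]
      · rw [dif_neg hi]
        have : i ≠ j' := fun h => hi (h ▸ hj'q)
        simp [this]
  · -- a zero column
    obtain ⟨b, hbSp, hbSq⟩ := Finset.not_subset.mp hsub
    rw [hSp, Finset.mem_image] at hbSp
    obtain ⟨⟨j, hjp⟩, _, hjb⟩ := hbSp
    apply Matrix.det_eq_zero_of_column_eq_zero j
    intro i
    simp only [Matrix.of_apply]
    unfold tau
    rw [dif_pos hjp, hjb, vFun_apply_inr]
    by_cases hi : i ∈ q.1
    · rw [dif_pos hi]
      have : q.2.1 ⟨i, hi⟩ ≠ b := by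
        intro h
        exact hbSq (h ▸ Finset.mem_image_of_mem _ (Finset.mem_attach _ _))
      simp [this]
    · rw [dif_neg hi]

lemma Bmat_blockTriangular : (Bmat n).BlockTriangular (fun p => p.1.card) := by
  intro p q h
  exact Bmat_offdiag n p q (fun e => absurd (congrArg (fun r => r.1.card) e) (ne_of_gt h)) (le_of_lt h)

lemma Bmat_det : (Bmat n).det = 1 := by
  rw [(Bmat_blockTriangular n).det]
  apply Finset.prod_eq_one
  intro a _
  have : (Bmat n).toSquareBlock (fun p => p.1.card) a = 1 := by
    ext ⟨p, hp⟩ ⟨q, hq⟩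
    rw [Matrix.one_apply]
    by_cases h : p = q
    · subst h
      simp [Matrix.toSquareBlock_def, Bmat_diag]
    · have : (⟨p, hp⟩ : {r : KIdx n // r.1.card = a}) ≠ ⟨q, hq⟩ := by
        simpa using h
      rw [if_neg this]
      exact Bmat_offdiag n p q h (le_of_eq (hq.trans hp.symm))
  rw [this, Matrix.det_one]

/-- `n`-element subsets of the index set. -/
def nsub := {s : Finset (Fin n ⊕ Fin n) // s.card = n}

instance : Fintype (nsub n) := inferInstanceAs (Fintype {s : Finset (Fin n ⊕ Fin n) // s.card = n})
instance : DecidableEq (nsub n) := inferInstanceAs (DecidableEq {s : Finset (Fin n ⊕ Fin n) // s.card = n})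

/-- Enumeration of an `n`-element subset. -/
noncomputable def enumE (T : nsub n) : Fin n ≃ {x // x ∈ T.1} :=
  (finCongr T.2.symm).trans T.1.equivFin.symm

noncomputable def enum (T : nsub n) : Fin n → II n := fun i => (enumE n T i : II n)

lemma enum_injective (T : nsub n) : Function.Injective (enum n T) :=
  fun _ _ h => (enumE n T).injective (Subtype.ext h)

lemma enum_mem (T : nsub n) (i : Fin n) : enum n T i ∈ T.1 := (enumE n T i).2

lemma enum_surj (T : nsub n) {x : II n} (hx : x ∈ T.1) : ∃ i, enum n T i = x :=
  ⟨(enumE n T).symm ⟨x, hx⟩, by simp [enum]⟩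

/-- Standard wedge elements. -/
noncomputable def bT (T : nsub n) : ExteriorAlgebra ℤ (MM n) :=
  ιMulti ℤ n (fun i => Pi.single (enum n T i) (1 : ℤ))

lemma single_term_mem (r : Fin n → II n) :
    ιMulti ℤ n (fun i => Pi.single (r i) (1 : ℤ)) ∈
      Submodule.span ℤ (Set.range (bT n)) := by
  by_cases hr : Function.Injective r
  · set T : nsub n := ⟨Finset.univ.image r, by
      rw [Finset.card_image_of_injective _ hr, Finset.card_univ, Fintype.card_fin]⟩ with hT
    have hmem : ∀ i, r i ∈ T.1 := fun i => Finset.mem_image_of_mem _ (Finset.mem_univ _)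
    have hgbij : Function.Bijective (fun i => (enumE n T).symm ⟨r i, hmem i⟩) := by
      apply Finite.injective_iff_bijective.mp
      intro a b h
      apply hr
      have h2 := congrArg (fun z => ((enumE n T) z : II n)) h
      simpa using h2
    set π : Equiv.Perm (Fin n) := Equiv.ofBijective _ hgbij with hπ
    have henum : ∀ i, enum n T (π i) = r i := by
      intro i
      have h3 : π i = (enumE n T).symm ⟨r i, hmem i⟩ := rfl
      rw [h3]
      simp [enum]
    have hcomp : (fun i => Pi.single (r i) (1 : ℤ)) =
        (fun i => Pi.single (enum n T i) (1 : ℤ)) ∘ π := by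
      funext i
      simp only [Function.comp_apply, henum i]
    rw [hcomp, AlternatingMap.map_perm]
    rw [Units.smul_def]
    exact Submodule.smul_mem _ _ (Submodule.subset_span ⟨T, rfl⟩)
  · rw [Function.not_injective_iff] at hr
    obtain ⟨a, b, hab, hne⟩ := hr
    have hv : (fun i => (Pi.single (r i) (1 : ℤ) : MM n)) a
        = (fun i => (Pi.single (r i) (1 : ℤ) : MM n)) b :=
      congrArg (fun x => (Pi.single x (1 : ℤ) : MM n)) hab
    have : ιMulti ℤ n (fun i => (Pi.single (r i) (1 : ℤ) : MM n)) = 0 :=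
      AlternatingMap.map_eq_zero_of_eq _ _ hv hne
    rw [this]
    exact Submodule.zero_mem _

lemma ιMulti_mem_span (v : Fin n → MM n) :
    ιMulti ℤ n v ∈ Submodule.span ℤ (Set.range (bT n)) := by
  have hv : ∀ i, v i = ∑ a : II n, v i a • Pi.single a (1 : ℤ) := by
    intro i
    funext j
    rw [Finset.sum_apply]
    simp [Pi.single_apply, eq_comm, mul_comm]
  have h1 : ιMulti ℤ n v =
      (ιMulti ℤ n (M := MM n)).toMultilinearMap
        (fun i => ∑ a : II n, v i a • Pi.single a (1 : ℤ)) := by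
    rw [← funext hv]; rfl
  rw [h1, MultilinearMap.map_sum]
  apply Submodule.sum_mem
  intro r _
  have : (ιMulti ℤ n (M := MM n)).toMultilinearMap
      (fun i => v i (r i) • Pi.single (r i) (1 : ℤ)) =
      (∏ i, v i (r i)) • ιMulti ℤ n (fun i => Pi.single (r i) (1 : ℤ)) := by
    rw [MultilinearMap.map_smul_univ]; rfl
  rw [this]
  exact Submodule.smul_mem _ _ (single_term_mem n r)

lemma span_top (z : ExteriorAlgebra ℤ (MM n)) (hz : z ∈ ⋀[ℤ]^n (MM n)) :
    z ∈ Submodule.span ℤ (Set.range (bT n)) := by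
  have h0 := ιMulti_span_fixedDegree ℤ n (M := MM n)
  rw [← h0] at hz
  refine Submodule.span_le.mpr ?_ hz
  rintro _ ⟨v, rfl⟩
  exact ιMulti_mem_span n v




lemma exists_p (T : nsub n) :
    ∃ p : KIdx n, Finset.image (tau n p) Finset.univ = T.1 := by
  classical
  set A : Finset (Fin n) := Finset.univ.filter (fun a : Fin n => Sum.inl a ∈ T.1) with hA
  set Bs : Finset (Fin n) := Finset.univ.filter (fun b : Fin n => Sum.inr b ∈ T.1) with hBs
  have hpart : T.1 = A.image Sum.inl ∪ Bs.image Sum.inr := by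
    ext x
    cases x <;> simp [hA, hBs]
  have hdisj : Disjoint (A.image Sum.inl) (Bs.image Sum.inr) := by
    rw [Finset.disjoint_left]
    rintro x hx hx'
    rw [Finset.mem_image] at hx hx'
    obtain ⟨a, _, rfl⟩ := hx
    obtain ⟨b, _, h⟩ := hx'
    exact Sum.inr_ne_inl h
  have hcardT : A.card + Bs.card = n := by
    have := T.2
    rw [hpart, Finset.card_union_of_disjoint hdisj,
      Finset.card_image_of_injective _ Sum.inl_injective,
      Finset.card_image_of_injective _ Sum.inr_injective] at this
    exact this
  set K : Finset (Fin n) := Aᶜ with hK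
  have hKcard : Bs.card = K.card := by
    rw [hK, Finset.card_compl, Fintype.card_fin]
    omega
  set κ : {x // x ∈ K} → Fin n :=
    fun i => ↑(Bs.orderIsoOfFin hKcard ((K.orderIsoOfFin rfl).symm i)) with hκ
  have hmono : StrictMono κ := by
    apply (Subtype.strictMono_coe _).comp
    exact (Bs.orderIsoOfFin hKcard).strictMono.comp (K.orderIsoOfFin rfl).symm.strictMono
  refine ⟨⟨K, κ, hmono⟩, ?_⟩
  have hsub : Finset.image (tau n ⟨K, κ, hmono⟩) Finset.univ ⊆ T.1 := by
    intro x hx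
    rw [Finset.mem_image] at hx
    obtain ⟨j, _, rfl⟩ := hx
    unfold tau
    by_cases hj : j ∈ K
    · rw [dif_pos hj]
      have : κ ⟨j, hj⟩ ∈ Bs := (Bs.orderIsoOfFin hKcard ((K.orderIsoOfFin rfl).symm ⟨j, hj⟩)).2
      rw [hBs, Finset.mem_filter] at this
      exact this.2
    · rw [dif_neg hj]
      have : j ∈ A := by
        rw [hK] at hj
        simpa using hj
      rw [hA, Finset.mem_filter] at this
      exact this.2
  apply Finset.eq_of_subset_of_card_le hsub
  have hc : (Finset.image (tau n ⟨K, κ, hmono⟩) Finset.univ).card = n :=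
    (Finset.card_image_of_injective Finset.univ (tau_injective n ⟨K, κ, hmono⟩)).trans
      (by rw [Finset.card_univ, Fintype.card_fin])
  exact le_of_eq (T.2.trans hc.symm)

lemma pair_ne (p : KIdx n) (T T' : nsub n)
    (himg : Finset.image (tau n p) Finset.univ = T.1) (hne : T' ≠ T) :
    lam n (tau n p) (bT n T') = 0 := by
  unfold bT
  rw [lam_ιMulti]
  have hns : ¬ T'.1 ⊆ T.1 := by
    intro h
    exact hne (Subtype.ext (Finset.eq_of_subset_of_card_le h (by rw [T.2, T'.2])))
  obtain ⟨x, hxT', hxT⟩ := Finset.not_subset.mp hns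
  obtain ⟨i₀, hi₀⟩ := enum_surj n T' hxT'
  apply Matrix.det_eq_zero_of_row_eq_zero i₀
  intro j
  simp only [Matrix.of_apply]
  rw [hi₀, Pi.single_apply, if_neg]
  intro h
  apply hxT
  rw [← h, ← himg]
  exact Finset.mem_image_of_mem _ (Finset.mem_univ _)

lemma pair_self (p : KIdx n) (T : nsub n)
    (himg : Finset.image (tau n p) Finset.univ = T.1) :
    IsUnit (lam n (tau n p) (bT n T)) := by
  unfold bT
  rw [lam_ιMulti]
  have hmem : ∀ j, tau n p j ∈ T.1 := by
    intro j
    rw [← himg]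
    exact Finset.mem_image_of_mem _ (Finset.mem_univ _)
  have hbij : Function.Bijective (fun j => (enumE n T).symm ⟨tau n p j, hmem j⟩) := by
    apply Finite.injective_iff_bijective.mp
    intro a b h
    apply tau_injective n p
    have h2 := congrArg (fun z => ((enumE n T) z : II n)) h
    simpa using h2
  set π : Equiv.Perm (Fin n) := Equiv.ofBijective _ hbij with hπ
  have henum : ∀ j, enum n T (π j) = tau n p j := by
    intro j
    have h3 : π j = (enumE n T).symm ⟨tau n p j, hmem j⟩ := rfl
    rw [h3]
    simp [enum]
  have hP : (Matrix.of fun i j => (Pi.single (enum n T i) (1 : ℤ) : MM n) (tau n p j))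
      = (π.toPEquiv.toMatrix).transpose := by
    ext i j
    rw [Matrix.transpose_apply, PEquiv.toMatrix_apply, Matrix.of_apply, Pi.single_apply,
      Equiv.toPEquiv_apply]
    by_cases h : π j = i
    · subst h
      rw [if_pos (henum j).symm, if_pos (by rfl)]
    · rw [if_neg, if_neg]
      · intro hc
        exact h (by injection hc)
      · intro hc
        apply h
        apply enum_injective n T
        rw [henum j, hc]
  rw [hP, Matrix.det_transpose, Matrix.det_permutation]
  exact (Equiv.Perm.sign π).isUnit

lemma psi_inj (z : ExteriorAlgebra ℤ (MM n)) (hz : z ∈ ⋀[ℤ]^n (MM n))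
    (h0 : ∀ p : KIdx n, lam n (tau n p) z = 0) : z = 0 := by
  have hspan := span_top n z hz
  rw [Submodule.mem_span_range_iff_exists_fun] at hspan
  obtain ⟨d, hd⟩ := hspan
  have hdz : ∀ T : nsub n, d T = 0 := by
    intro T
    obtain ⟨p, hp⟩ := exists_p n T
    have h1 := h0 p
    rw [← hd, map_sum] at h1
    have h2 : ∀ T' ∈ Finset.univ, T' ≠ T → lam n (tau n p) (d T' • bT n T') = 0 := by
      intro T' _ hT'
      rw [map_smul, pair_ne n p T T' hp hT', smul_zero]
    rw [Finset.sum_eq_single T h2 (fun h => absurd (Finset.mem_univ T) h)] at h1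
    rw [map_smul, smul_eq_mul] at h1
    rcases mul_eq_zero.mp h1 with h | h
    · exact h
    · exact absurd h (pair_self n p T hp).ne_zero
  rw [← hd]
  simp [hdz]

end Stmt2Aux

open Stmt2Aux

/-- the family `{v_{(K,κ)}}` is a basis of the `ℤ`-module `Λ^n L`, where `L` is
free of rank `2n` with basis `{e₁,…,eₙ,x₁,…,xₙ}`. -/
theorem stmt2 (n : ℕ) (hn : 1 ≤ n) :
    ∃ b : Module.Basis (KIdx n) ℤ (⋀[ℤ]^n ((Fin n ⊕ Fin n) → ℤ)),
      ∀ p : KIdx n,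
        (b p : ExteriorAlgebra ℤ ((Fin n ⊕ Fin n) → ℤ)) = ιMulti ℤ n (vFun n p) := by
  classical
  set W : KIdx n → (⋀[ℤ]^n (MM n)) := fun p =>
    ⟨ιMulti ℤ n (vFun n p), ιMulti_range ℤ n (Set.mem_range_self _)⟩ with hW
  set Φ : (KIdx n → ℤ) →ₗ[ℤ] (⋀[ℤ]^n (MM n)) := Fintype.linearCombination ℤ W with hΦ
  set Ψ : (⋀[ℤ]^n (MM n)) →ₗ[ℤ] (KIdx n → ℤ) :=
    LinearMap.pi (fun p => (lam n (tau n p)).comp (Submodule.subtype _)) with hΨ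
  have hlamB : ∀ p q : KIdx n, lam n (tau n p) (ιMulti ℤ n (vFun n q)) = Bmat n p q := by
    intro p q
    rw [lam_ιMulti]
    rfl
  have hΨΦ : ∀ c, Ψ (Φ c) = (Bmat n).mulVec c := by
    intro c
    funext p
    have h1 : Ψ (Φ c) p = lam n (tau n p) ((Φ c : ⋀[ℤ]^n (MM n)) : ExteriorAlgebra ℤ (MM n)) := rfl
    rw [h1, hΦ, Fintype.linearCombination_apply]
    have h2 : ((∑ q, c q • W q : ⋀[ℤ]^n (MM n)) : ExteriorAlgebra ℤ (MM n))
        = ∑ q, c q • (ιMulti ℤ n (vFun n q)) := by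
      rw [AddSubmonoidClass.coe_finset_sum]
      rfl
    rw [h2, map_sum]
    rw [Matrix.mulVec, dotProduct]
    apply Finset.sum_congr rfl
    intro q _
    rw [map_smul, smul_eq_mul, hlamB, mul_comm]
  have hΨ0 : ∀ x : ⋀[ℤ]^n (MM n), Ψ x = 0 → x = 0 := by
    intro x hx
    apply Subtype.ext
    exact psi_inj n x.1 x.2 (fun p => congrFun hx p)
  have hΨinj : Function.Injective Ψ := by
    intro a b h
    have := hΨ0 (a - b) (by rw [map_sub, h, sub_self])
    rwa [sub_eq_zero] at this
  have hInv : Invertible (Bmat n) :=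
    Matrix.invertibleOfIsUnitDet (Bmat n) (by rw [Bmat_det]; exact isUnit_one)
  have hBbij : Function.Bijective ((Bmat n).mulVec) := by
    constructor
    · intro a b h
      have := congrArg ((⅟(Bmat n)).mulVec) h
      rwa [Matrix.mulVec_mulVec, Matrix.mulVec_mulVec, invOf_mul_self,
        Matrix.one_mulVec, Matrix.one_mulVec] at this
    · intro y
      exact ⟨(⅟(Bmat n)).mulVec y, by
        rw [Matrix.mulVec_mulVec, mul_invOf_self, Matrix.one_mulVec]⟩
  have hΦbij : Function.Bijective Φ := by
    constructor
    · intro a b h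
      apply hBbij.1
      rw [← hΨΦ, ← hΨΦ, h]
    · intro y
      obtain ⟨c, hc⟩ := hBbij.2 (Ψ y)
      exact ⟨c, hΨinj (by rw [hΨΦ, hc])⟩
  refine ⟨(Pi.basisFun ℤ (KIdx n)).map (LinearEquiv.ofBijective Φ hΦbij), ?_⟩
  intro p
  rw [Module.Basis.map_apply]
  have hbp : (Pi.basisFun ℤ (KIdx n)) p = Pi.single p 1 := by
    funext q
    simp [Pi.basisFun_apply, Pi.single_apply,
      Function.update_apply, eq_comm]
  have h3 : (LinearEquiv.ofBijective Φ hΦbij) ((Pi.basisFun ℤ (KIdx n)) p) = W p := by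
    rw [LinearEquiv.ofBijective_apply, hbp, hΦ, Fintype.linearCombination_apply]
    rw [Finset.sum_eq_single p]
    · rw [Pi.single_eq_same, one_smul]
    · intro q _ hq
      rw [Pi.single_eq_of_ne hq, zero_smul]
    · intro h
      exact absurd (Finset.mem_univ p) h
  rw [h3]
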